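/- Let ∇ be an L-connection on E and ψ an element of the Hom-gauge group with inverse [ψ]⁻¹ = φ_E∘ψ⁻¹∘φ_E. Then the gauge-transformed map ∇^ψ := (id ⊗ ([ψ]⁻¹∘φ_E⁻¹)) ∘ ∇ ∘ (φ_E⁻¹∘ψ) again satisfies the twisted Leibniz rule ∇^ψ(fs) = d_L(f)·φ_E(s) + φ*(f)·∇^ψ(s), i.e. ∇^ψ is an L-connection. -/
import Mathlib

/-- the gauge transform
∇^ψ = (id ⊗ ([ψ]⁻¹∘φ_E⁻¹)) ∘ ∇ ∘ (φ_E⁻¹∘ψ) of an L-connection ∇ satisfies the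
twisted Leibniz rule, hence is again an L-connection.  Here `tens` models simple
tensors in Γ(L*⊗E) and `ext h` models the operator id_{L*} ⊗ h. -/
theorem gauge_transform_is_connection {A E L N : Type*} [CommRing A]
    [AddCommGroup E] [Module A E] [AddCommGroup N] [Module A N]
    (φs : A ≃+* A) (φE : E ≃ E)
    (hφE_add : ∀ a b : E, φE (a + b) = φE a + φE b)
    (hφE : ∀ (f : A) (s : E), φE (f • s) = φs f • φE s)
    (dL : A → L) (tens : L → E → N)
    (ext : (E → E) → N → N)
    (hext_tens : ∀ (h : E → E) (l : L) (e : E), ext h (tens l e) = tens l (h e))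
    (hext_add : ∀ (h : E → E) (n m : N), ext h (n + m) = ext h n + ext h m)
    (hext_smul : ∀ (h : E → E) (a : A) (n : N), ext h (a • n) = a • ext h n)
    (ψ : E ≃ E)
    (hψ : ∀ (f : A) (s : E), ψ (f • s) = φs f • ψ s)
    (D : E → N)
    (hD : ∀ (f : A) (s : E), D (f • s) = tens (dL f) (φE s) + φs f • D s) :
    ∀ (f : A) (s : E),
      (fun t => ext ((⇑φE ∘ ⇑ψ.symm ∘ ⇑φE) ∘ ⇑φE.symm) (D (φE.symm (ψ t)))) (f • s)
        = tens (dL f) (φE s)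
          + φs f • (fun t => ext ((⇑φE ∘ ⇑ψ.symm ∘ ⇑φE) ∘ ⇑φE.symm) (D (φE.symm (ψ t)))) s := by
  intro f s
  have hφEs : ∀ (f : A) (s : E), φE.symm (φs f • s) = f • φE.symm s := by
    intro f s
    apply φE.injective
    rw [hφE, Equiv.apply_symm_apply, Equiv.apply_symm_apply]
  simp only []
  rw [hψ, hφEs, hD, hext_add, hext_smul, hext_tens]
  simp [Equiv.apply_symm_apply]
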